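/- Let Γ be a Blackwell game with finitely many players, finite action sets, and bounded, Borel-measurable, tail-measurable payoff functions, and let ε > 0. If there exist a strategy profile σ and some δ ∈ [0, ε) such that E_σ[f_i | h] ≥ v̄_i − δ for every player i ∈ I and every history h ∈ H, then Γ admits an ε-equilibrium. -/

import Mathlib

open MeasureTheory

namespace Blackwell

/-- The set of plays: infinite streams of action profiles. -/
abbrev Play {ι : Type*} (Ac : ι → Type*) : Type _ := ℕ → ∀ j, Ac j

/-- A behavior strategy of player `i`: a mixed action after every finite history.
A history of length `t` is encoded by the first `t` coordinates of a play, and the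
strategy is required to depend only on these coordinates. -/
structure Strategy {ι : Type*} (Ac : ι → Type*) (i : ι) where
  act : ℕ → Play Ac → PMF (Ac i)
  depends_on_past : ∀ (t : ℕ) (p q : Play Ac), (∀ s, s < t → p s = q s) → act t p = act t q

/-- A strategy profile: a behavior strategy for every player. -/
abbrev Profile {ι : Type*} (Ac : ι → Type*) : Type _ := ∀ i, Strategy Ac i

/-- The assignment, to each strategy profile `σ`, of the induced (Ionescu–Tulcea)
probability measure `P_σ` on the set of plays; it is uniquely characterized by the
probabilities it assigns to cylinder sets. -/
structure PlayMeasure {ι : Type*} [Fintype ι] (Ac : ι → Type*)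
    [∀ i, MeasurableSpace (Ac i)] where
  μ : Profile Ac → Measure (Play Ac)
  isProb : ∀ σ, IsProbabilityMeasure (μ σ)
  cyl : ∀ (σ : Profile Ac) (n : ℕ) (p : Play Ac),
    μ σ {q | ∀ t, t < n → q t = p t}
      = ∏ t ∈ Finset.range n, ∏ i, ((σ i).act t p) (p t i)

variable {ι : Type*} [Fintype ι] [DecidableEq ι] [Nonempty ι]
  {Ac : ι → Type*} [∀ i, Fintype (Ac i)] [∀ i, Nonempty (Ac i)]
  [∀ i, MeasurableSpace (Ac i)] [∀ i, DiscreteMeasurableSpace (Ac i)]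

/-- The expected payoff `E_σ[f]` of a strategy profile `σ` for payoff function `f`. -/
noncomputable def expPay (PM : PlayMeasure Ac) (σ : Profile Ac) (f : Play Ac → ℝ) : ℝ :=
  ∫ p, f p ∂(PM.μ σ)

/-- Concatenation of the history given by the first `n` coordinates of `h` with the play `q`. -/
def splice (n : ℕ) (h q : Play Ac) : Play Ac := fun t => if t < n then h t else q (t - n)

/-- The continuation of a strategy in the subgame that starts at the history
given by the first `n` coordinates of `h`. -/
def Strategy.shift {i : ι} (σi : Strategy Ac i) (n : ℕ) (h : Play Ac) : Strategy Ac i where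
  act t q := σi.act (n + t) (splice n h q)
  depends_on_past := by
    intro t p q hpq
    refine σi.depends_on_past _ _ _ ?_
    intro s hs
    simp only [splice]
    by_cases hsn : s < n
    · simp [hsn]
    · simp only [if_neg hsn]
      exact hpq (s - n) (by omega)

/-- The expected payoff `E_σ[f ∣ h]` in the subgame that starts at the history
given by the first `n` coordinates of `h`. -/
noncomputable def subExp (PM : PlayMeasure Ac) (σ : Profile Ac) (f : Play Ac → ℝ)
    (n : ℕ) (h : Play Ac) : ℝ :=
  ∫ q, f (splice n h q) ∂(PM.μ (fun i => (σ i).shift n h))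

/-- The minmax value of player `i`. -/
noncomputable def minmax (PM : PlayMeasure Ac) (f : Play Ac → ℝ) (i : ι) : ℝ :=
  ⨅ τ : Profile Ac, ⨆ σi : Strategy Ac i, expPay PM (Function.update τ i σi) f

/-- The maxmin value of player `i`. -/
noncomputable def maxmin (PM : PlayMeasure Ac) (f : Play Ac → ℝ) (i : ι) : ℝ :=
  ⨆ σi : Strategy Ac i, ⨅ τ : Profile Ac, expPay PM (Function.update τ i σi) f

/-- The minmax value of player `i` in the subgame that starts at the history
given by the first `n` coordinates of `h`. -/
noncomputable def subMinmax (PM : PlayMeasure Ac) (f : Play Ac → ℝ) (i : ι)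
    (n : ℕ) (h : Play Ac) : ℝ :=
  ⨅ τ : Profile Ac, ⨆ σi : Strategy Ac i, subExp PM (Function.update τ i σi) f n h

/-- The maxmin value of player `i` in the subgame that starts at the history
given by the first `n` coordinates of `h`. -/
noncomputable def subMaxmin (PM : PlayMeasure Ac) (f : Play Ac → ℝ) (i : ι)
    (n : ℕ) (h : Play Ac) : ℝ :=
  ⨆ σi : Strategy Ac i, ⨅ τ : Profile Ac, subExp PM (Function.update τ i σi) f n h

/-- A strategy profile `σ` is an `ε`-equilibrium if no player can gain more than `ε`
by a unilateral deviation. -/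
def IsEpsEquilibrium (PM : PlayMeasure Ac) (f : ι → Play Ac → ℝ) (ε : ℝ)
    (σ : Profile Ac) : Prop :=
  ∀ (i : ι) (σi : Strategy Ac i),
    expPay PM (Function.update σ i σi) (f i) ≤ expPay PM σ (f i) + ε

/-- A payoff function is tail-measurable if changing finitely many coordinates of the
play does not change its value. -/
def TailMeasurable (f : Play Ac → ℝ) : Prop :=
  ∀ p q : Play Ac, (∃ N, ∀ t, N ≤ t → p t = q t) → f p = f q

/-- A payoff function is bounded. -/
def BddPayoff (f : Play Ac → ℝ) : Prop := ∃ C, ∀ p, |f p| ≤ C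

set_option linter.unusedSectionVars false

/-! ### Auxiliary development -/

section Aux

theorem Strategy.ext' {i : ι} {σ τ : Strategy Ac i} (h : σ.act = τ.act) : σ = τ := by
  cases σ; cases τ; cases h; rfl

noncomputable def dfltA : ∀ j, Ac j := fun j => Classical.arbitrary (Ac j)

instance {i : ι} : Nonempty (Strategy Ac i) :=
  ⟨⟨fun _ _ => PMF.pure (Classical.arbitrary (Ac i)), fun _ _ _ _ => rfl⟩⟩

instance : Nonempty (Profile Ac) := ⟨fun _ => Classical.arbitrary _⟩

/-- Cylinder sets -/
def Cyl (n : ℕ) (p : Play Ac) : Set (Play Ac) := {q | ∀ t, t < n → q t = p t}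

theorem mem_cyl {n : ℕ} {p q : Play Ac} : q ∈ Cyl n p ↔ ∀ t, t < n → q t = p t := Iff.rfl

theorem cyl_measure (PM : PlayMeasure Ac) (σ : Profile Ac) (n : ℕ) (p : Play Ac) :
    PM.μ σ (Cyl n p) = ∏ t ∈ Finset.range n, ∏ i, ((σ i).act t p) (p t i) :=
  PM.cyl σ n p

/-- truncation of a play -/
noncomputable def trunc (n : ℕ) (p : Play Ac) : Play Ac := fun t => if t < n then p t else dfltA

theorem trunc_lt {n t : ℕ} (h : t < n) (p : Play Ac) : trunc n p t = p t := if_pos h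

theorem trunc_congr {n : ℕ} {p q : Play Ac} (h : ∀ t, t < n → p t = q t) :
    trunc n p = trunc n q := by
  funext t; by_cases ht : t < n
  · simp [trunc, ht, h t ht]
  · simp [trunc, ht]

theorem trunc_trunc {n : ℕ} (p : Play Ac) : trunc n (trunc n p) = trunc n p :=
  trunc_congr fun t ht => trunc_lt ht p

theorem splice_zero (h q : Play Ac) : splice 0 h q = q := by
  funext t; simp [splice]

theorem splice_congr {n : ℕ} {h h' : Play Ac} (hh : ∀ t, t < n → h t = h' t) (q : Play Ac) :
    splice n h q = splice n h' q := by
  funext t; simp only [splice]; split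
  · exact hh t ‹_›
  · rfl

theorem splice_trunc {n : ℕ} (h q : Play Ac) : splice n (trunc n h) q = splice n h q :=
  splice_congr (fun t ht => trunc_lt ht h) q

theorem measurableSet_cyl (n : ℕ) (p : Play Ac) : MeasurableSet (Cyl n p) := by
  have : Cyl n p = ⋂ (t : ℕ) (_ : t < n), (fun q : Play Ac => q t) ⁻¹' {p t} := by
    ext q; simp [Cyl, Set.mem_iInter]
  rw [this]
  exact MeasurableSet.iInter fun t => MeasurableSet.iInter fun _ =>
    (measurable_pi_apply t) (measurableSet_singleton _)

theorem measurable_splice (n : ℕ) (h : Play Ac) : Measurable fun q : Play Ac => splice n h q := by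
  refine measurable_pi_lambda _ fun t => ?_
  by_cases ht : t < n
  · simpa [splice, ht] using measurable_const
  · simpa [splice, ht] using measurable_pi_apply (t - n)

theorem integrable_of_bdd {μ : Measure (Play Ac)} [IsProbabilityMeasure μ] {f : Play Ac → ℝ}
    {C : ℝ} (hm : Measurable f) (hb : ∀ p, |f p| ≤ C) : Integrable f μ :=
  ⟨hm.aestronglyMeasurable,
    MeasureTheory.HasFiniteIntegral.of_bounded (C := C) (Filter.Eventually.of_forall hb)⟩

theorem abs_integral_le_of_bdd {μ : Measure (Play Ac)} [IsProbabilityMeasure μ]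
    {f : Play Ac → ℝ} {C : ℝ} (hb : ∀ p, |f p| ≤ C) : |∫ p, f p ∂μ| ≤ C := by
  have := MeasureTheory.norm_integral_le_of_norm_le_const (μ := μ) (f := f) (C := C)
    (Filter.Eventually.of_forall fun p => hb p)
  simpa [measure_univ] using this

end Aux
section Aux2
set_option linter.unusedSectionVars false

/-- the collection of cylinder sets -/
def cylSets : Set (Set (Play Ac)) := {s | ∃ n p, s = Cyl n p}

theorem isPiSystem_cylSets : IsPiSystem (cylSets (Ac := Ac)) := by
  rintro _ ⟨n, p, rfl⟩ _ ⟨m, p', rfl⟩ hne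
  obtain ⟨q, hq1, hq2⟩ := hne
  rcases le_total n m with h | h
  · refine ⟨m, p', ?_⟩
    have : Cyl m p' ⊆ Cyl n p := fun r hr t ht => by
      rw [hr t (lt_of_lt_of_le ht h)]
      rw [← hq2 t (lt_of_lt_of_le ht h), hq1 t ht]
    rw [Set.inter_eq_self_of_subset_right this]
  · refine ⟨n, p, ?_⟩
    have : Cyl n p ⊆ Cyl m p' := fun r hr t ht => by
      rw [hr t (lt_of_lt_of_le ht h)]
      rw [← hq1 t (lt_of_lt_of_le ht h), hq2 t ht]
    rw [Set.inter_eq_self_of_subset_left this]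

/-- extension of a finite prefix to a play -/
noncomputable def extV (n : ℕ) (v : Fin n → ∀ j, Ac j) : Play Ac :=
  fun t => if h : t < n then v ⟨t, h⟩ else dfltA

theorem cyl_extV_self {n : ℕ} (q : Play Ac) : q ∈ Cyl n (extV n (fun t : Fin n => q t)) := by
  intro t ht; simp [extV, ht]

theorem eval_preimage_singleton (t : ℕ) (a : ∀ j, Ac j) :
    (fun q : Play Ac => q t) ⁻¹' {a} =
      ⋃ (v : Fin (t + 1) → ∀ j, Ac j) (_ : v ⟨t, Nat.lt_succ_self t⟩ = a),
        Cyl (t + 1) (extV (t + 1) v) := by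
  ext q
  simp only [Set.mem_preimage, Set.mem_singleton_iff, Set.mem_iUnion]
  constructor
  · rintro rfl
    exact ⟨fun s => q s, rfl, cyl_extV_self q⟩
  · rintro ⟨v, rfl, hq⟩
    have := hq t (Nat.lt_succ_self t)
    simpa [extV] using this

theorem generateFrom_cylSets :
    (inferInstance : MeasurableSpace (Play Ac)) = MeasurableSpace.generateFrom cylSets := by
  refine le_antisymm ?_ ?_
  · -- pi ≤ generateFrom
    refine iSup_le fun t => ?_
    rw [MeasurableSpace.comap_le_iff_le_map]
    intro s _
    have hs : s = ⋃ a ∈ s, {a} := by simp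
    rw [MeasurableSpace.map_def]
    show MeasurableSet[MeasurableSpace.generateFrom cylSets] ((fun q : Play Ac => q t) ⁻¹' s)
    rw [hs, Set.preimage_iUnion₂]
    refine MeasurableSet.biUnion (Set.to_countable _) fun a _ => ?_
    rw [eval_preimage_singleton]
    refine MeasurableSet.iUnion fun v => MeasurableSet.iUnion fun _ => ?_
    exact MeasurableSpace.measurableSet_generateFrom ⟨t + 1, extV (t + 1) v, rfl⟩
  · refine MeasurableSpace.generateFrom_le ?_
    rintro _ ⟨n, p, rfl⟩
    exact measurableSet_cyl n p

theorem measure_ext_cyl {μ ν : Measure (Play Ac)} [IsFiniteMeasure μ] [IsFiniteMeasure ν]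
    (h : ∀ n p, μ (Cyl n p) = ν (Cyl n p)) (huniv : μ Set.univ = ν Set.univ) : μ = ν := by
  refine MeasureTheory.ext_of_generate_finite cylSets generateFrom_cylSets isPiSystem_cylSets
    ?_ huniv
  rintro _ ⟨n, p, rfl⟩
  exact h n p

end Aux2
section Aux3
set_option linter.unusedSectionVars false

theorem prod_decomp (PM : PlayMeasure Ac) (ρ : Profile Ac) {n m : ℕ} (hnm : n ≤ m)
    {w p : Play Ac} (hag : ∀ t, t < n → p t = w t) :
    PM.μ ρ (Cyl m p)
      = PM.μ ρ (Cyl n w)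
        * PM.μ (fun j => (ρ j).shift n w) (Cyl (m - n) (fun s => p (n + s))) := by
  rw [cyl_measure, cyl_measure, cyl_measure]
  have hm : m = n + (m - n) := by omega
  conv_lhs => rw [hm]
  rw [Finset.prod_range_add]
  congr 1
  · refine Finset.prod_congr rfl fun t ht => ?_
    rw [Finset.mem_range] at ht
    refine Finset.prod_congr rfl fun j _ => ?_
    have hp : (ρ j).act t p = (ρ j).act t w :=
      (ρ j).depends_on_past t p w (fun s hs => hag s (by omega))
    rw [hp, hag t (by omega)]
  · refine Finset.prod_congr rfl fun s hs => ?_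
    rw [Finset.mem_range] at hs
    refine Finset.prod_congr rfl fun j _ => ?_
    show (ρ j).act (n + s) p (p (n + s) j)
      = (ρ j).act (n + s) (splice n w (fun s' => p (n + s'))) (p (n + s) j)
    congr 1
    refine (ρ j).depends_on_past _ _ _ (fun r hr => ?_)
    by_cases hrn : r < n
    · simp [splice, hrn, hag r hrn]
    · simp only [splice, if_neg hrn]
      rw [show n + (r - n) = r by omega]

theorem restrict_cyl (PM : PlayMeasure Ac) (ρ : Profile Ac) (n : ℕ) (w : Play Ac) :
    (PM.μ ρ).restrict (Cyl n w)
      = PM.μ ρ (Cyl n w)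
          • Measure.map (splice n w) (PM.μ (fun j => (ρ j).shift n w)) := by
  haveI := PM.isProb ρ
  haveI := PM.isProb (fun j => (ρ j).shift n w)
  set ν := Measure.map (splice n w) (PM.μ (fun j => (ρ j).shift n w)) with hν
  haveI : IsProbabilityMeasure ν :=
    MeasureTheory.Measure.isProbabilityMeasure_map (measurable_splice n w).aemeasurable
  haveI : IsFiniteMeasure (PM.μ ρ (Cyl n w) • ν) := by
    refine ⟨?_⟩
    rw [Measure.smul_apply, smul_eq_mul, measure_univ, mul_one]
    exact measure_lt_top _ _
  refine measure_ext_cyl (fun m p => ?_) ?_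
  · rw [Measure.restrict_apply (measurableSet_cyl m p), Measure.smul_apply, smul_eq_mul,
        hν, Measure.map_apply (measurable_splice n w) (measurableSet_cyl m p)]
    by_cases hag : ∀ t, t < min m n → p t = w t
    · rcases le_total m n with h | h
      · have h1 : Cyl m p ∩ Cyl n w = Cyl n w := by
          apply Set.inter_eq_self_of_subset_right
          intro q hq t ht
          rw [hq t (lt_of_lt_of_le ht h), ← hag t (by omega)]
        have h2 : (fun q : Play Ac => splice n w q) ⁻¹' Cyl m p = Set.univ := by
          ext q
          simp only [Set.mem_preimage, Set.mem_univ, iff_true, mem_cyl]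
          intro t ht
          have htn : t < n := lt_of_lt_of_le ht h
          simp [splice, htn, hag t (by omega)]
        rw [h1, h2, measure_univ, mul_one]
      · have h1 : Cyl m p ∩ Cyl n w = Cyl m p := by
          apply Set.inter_eq_self_of_subset_left
          intro q hq t ht
          rw [hq t (by omega), ← hag t (by omega)]
        have h2 : (fun q : Play Ac => splice n w q) ⁻¹' Cyl m p
            = Cyl (m - n) (fun s => p (n + s)) := by
          ext q
          simp only [Set.mem_preimage, mem_cyl]
          constructor
          · intro hq s hs
            have h3 := hq (n + s) (by omega)
            simpa [splice, show ¬ (n + s < n) by omega, Nat.add_sub_cancel_left] using h3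
          · intro hq t ht
            by_cases htn : t < n
            · simp [splice, htn, hag t (by omega)]
            · have h3 := hq (t - n) (by omega)
              simp only [splice, if_neg htn]
              rw [h3, show n + (t - n) = t by omega]
        rw [h1, h2]
        exact prod_decomp PM ρ h (fun t ht => hag t (by omega))
    · push_neg at hag
      obtain ⟨t0, ht0, hne⟩ := hag
      have h1 : Cyl m p ∩ Cyl n w = ∅ := by
        ext q
        simp only [Set.mem_inter_iff, Set.mem_empty_iff_false, iff_false, mem_cyl, not_and]
        intro hq1 hq2
        exact absurd (by rw [← hq1 t0 (by omega), hq2 t0 (by omega)]) hne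
      have h2 : (fun q : Play Ac => splice n w q) ⁻¹' Cyl m p = ∅ := by
        ext q
        simp only [Set.mem_preimage, Set.mem_empty_iff_false, iff_false, mem_cyl]
        intro hq
        have h3 := hq t0 (by omega)
        rw [splice] at h3
        simp only [show t0 < n by omega, if_pos] at h3
        exact hne h3.symm
      rw [h1, h2]
      simp
  · rw [Measure.restrict_apply MeasurableSet.univ, Set.univ_inter, Measure.smul_apply,
        smul_eq_mul, measure_univ, mul_one]

theorem setIntegral_cyl (PM : PlayMeasure Ac) (ρ : Profile Ac) (n : ℕ) (w : Play Ac)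
    {g : Play Ac → ℝ} (hm : Measurable g) :
    ∫ q in Cyl n w, g q ∂ PM.μ ρ
      = (PM.μ ρ (Cyl n w)).toReal
          * ∫ q, g (splice n w q) ∂ PM.μ (fun j => (ρ j).shift n w) := by
  haveI := PM.isProb (fun j => (ρ j).shift n w)
  rw [show (∫ q in Cyl n w, g q ∂PM.μ ρ) = ∫ q, g q ∂((PM.μ ρ).restrict (Cyl n w)) from rfl,
      restrict_cyl PM ρ n w, integral_smul_measure,
      integral_map (measurable_splice n w).aemeasurable hm.aestronglyMeasurable]
  simp [smul_eq_mul]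

end Aux3
section Aux4
set_option linter.unusedSectionVars false

theorem sum_piece {μ : Measure (Play Ac)} [IsProbabilityMeasure μ] {Z : Type*} [Countable Z]
    {S : Z → Set (Play Ac)} (hmeas : ∀ z, MeasurableSet (S z))
    (hdisj : Pairwise (Function.onFun Disjoint S)) (hcover : (⋃ z, S z) = Set.univ)
    {g : Play Ac → ℝ} (hg : Integrable g μ) {B : ℝ}
    (hpiece : ∀ z, ∫ q in S z, g q ∂μ ≤ (μ (S z)).toReal * B) : ∫ q, g q ∂μ ≤ B := by
  have hint : ∫ q, g q ∂μ = ∑' z, ∫ q in S z, g q ∂μ := by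
    rw [← MeasureTheory.setIntegral_univ, ← hcover]
    exact MeasureTheory.integral_iUnion hmeas hdisj (hcover ▸ hg.integrableOn)
  have hSum : HasSum (fun z => ∫ q in S z, g q ∂μ) (∫ q in ⋃ z, S z, g q ∂μ) :=
    MeasureTheory.hasSum_integral_iUnion hmeas hdisj (hcover ▸ hg.integrableOn)
  have hμsum : ∑' z, μ (S z) = 1 := by
    rw [← measure_iUnion hdisj hmeas, hcover, measure_univ]
  have hsummeas : Summable fun z => (μ (S z)).toReal := by
    refine ENNReal.summable_toReal ?_
    rw [hμsum]; exact ENNReal.one_ne_top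
  have hsum2 : Summable fun z => (μ (S z)).toReal * B := hsummeas.mul_right B
  calc ∫ q, g q ∂μ = ∑' z, ∫ q in S z, g q ∂μ := hint
    _ ≤ ∑' z, (μ (S z)).toReal * B := Summable.tsum_le_tsum hpiece hSum.summable hsum2
    _ = (∑' z, (μ (S z)).toReal) * B := tsum_mul_right
    _ = B := by
        rw [← ENNReal.tsum_toReal_eq (fun z => measure_ne_top μ (S z)), hμsum]
        simp

theorem constPlay_cyl_disjoint :
    Pairwise (Function.onFun Disjoint fun b : ∀ j, Ac j => Cyl 1 (fun _ => b)) := by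
  intro b b' hbb
  refine Set.disjoint_left.2 fun q hq hq' => hbb ?_
  have h1 := hq 0 (by omega)
  have h2 := hq' 0 (by omega)
  exact h1.symm.trans h2

theorem constPlay_cyl_cover : (⋃ b : ∀ j, Ac j, Cyl 1 (fun _ => b)) = Set.univ := by
  ext q
  simp only [Set.mem_iUnion, Set.mem_univ, iff_true]
  exact ⟨q 0, fun t ht => by rw [show t = 0 by omega]⟩

theorem integral_eq_sum_firstStage (PM : PlayMeasure Ac) (ρ : Profile Ac)
    {g : Play Ac → ℝ} {C : ℝ} (hm : Measurable g) (hb : ∀ p, |g p| ≤ C) :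
    ∫ q, g q ∂ PM.μ ρ
      = ∑ b : ∀ j, Ac j, (PM.μ ρ (Cyl 1 (fun _ => b))).toReal
          * ∫ q, g (splice 1 (fun _ => b) q) ∂ PM.μ (fun j => (ρ j).shift 1 (fun _ => b)) := by
  haveI := PM.isProb ρ
  have hint : Integrable g (PM.μ ρ) := integrable_of_bdd hm hb
  rw [← MeasureTheory.setIntegral_univ, ← constPlay_cyl_cover,
    MeasureTheory.integral_iUnion (fun b => measurableSet_cyl 1 _) constPlay_cyl_disjoint
      (by rw [constPlay_cyl_cover]; exact hint.integrableOn), tsum_fintype]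
  exact Finset.sum_congr rfl fun b _ => setIntegral_cyl PM ρ 1 _ hm

theorem sum_firstStage_weights (PM : PlayMeasure Ac) (ρ : Profile Ac) :
    ∑ b : ∀ j, Ac j, (PM.μ ρ (Cyl 1 (fun _ => b))).toReal = 1 := by
  haveI := PM.isProb ρ
  have h1 : ∑ b : ∀ j, Ac j, PM.μ ρ (Cyl 1 (fun _ => b)) = 1 := by
    rw [← tsum_fintype (L := .unconditional _), ← measure_iUnion constPlay_cyl_disjoint (fun b => measurableSet_cyl 1 _),
      constPlay_cyl_cover, measure_univ]
  rw [← ENNReal.toReal_sum (fun b _ => measure_ne_top _ _), h1, ENNReal.toReal_one]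

end Aux4
section Aux5
set_option linter.unusedSectionVars false

/-- inf-sup value of the game with payoff `g`, player `i` maximizing -/
noncomputable def Mg (PM : PlayMeasure Ac) (g : Play Ac → ℝ) (i : ι) : ℝ :=
  ⨅ τ : Profile Ac, ⨆ σi : Strategy Ac i, ∫ q, g q ∂ PM.μ (Function.update τ i σi)

theorem Mg_eq_minmax (PM : PlayMeasure Ac) (g : Play Ac → ℝ) (i : ι) :
    Mg PM g i = minmax PM g i := rfl

theorem bddAbove_payoff (PM : PlayMeasure Ac) {g : Play Ac → ℝ} {C : ℝ} (hb : ∀ p, |g p| ≤ C)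
    (i : ι) (τ : Profile Ac) :
    BddAbove (Set.range fun σi : Strategy Ac i =>
      ∫ q, g q ∂ PM.μ (Function.update τ i σi)) := by
  refine ⟨C, ?_⟩
  rintro x ⟨σi, rfl⟩
  haveI := PM.isProb (Function.update τ i σi)
  exact (abs_le.1 (abs_integral_le_of_bdd hb)).2

theorem bddBelow_suppayoff (PM : PlayMeasure Ac) {g : Play Ac → ℝ} {C : ℝ}
    (hb : ∀ p, |g p| ≤ C) (i : ι) :
    BddBelow (Set.range fun τ : Profile Ac => ⨆ σi : Strategy Ac i,
      ∫ q, g q ∂ PM.μ (Function.update τ i σi)) := by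
  refine ⟨-C, ?_⟩
  rintro x ⟨τ, rfl⟩
  refine le_trans ?_ (le_ciSup (bddAbove_payoff PM hb i τ) (Classical.arbitrary _))
  haveI := PM.isProb (Function.update τ i (Classical.arbitrary _))
  exact (abs_le.1 (abs_integral_le_of_bdd hb)).1

/-- the strategy that plays `a` first and then follows `R b` where `b` was the first
action profile -/
noncomputable def oneStepStrat (i : ι) (a : Ac i) (R : (∀ j, Ac j) → Strategy Ac i) :
    Strategy Ac i where
  act m p := match m with
    | 0 => PMF.pure a
    | Nat.succ t => (R (p 0)).act t (fun r => p (r + 1))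
  depends_on_past := by
    intro t p q hpq
    cases t with
    | zero => rfl
    | succ t =>
      simp only []
      rw [hpq 0 (by omega)]
      exact (R (q 0)).depends_on_past t _ _ (fun s hs => hpq (s + 1) (by omega))

theorem oneStepStrat_shift (i : ι) (a : Ac i) (R : (∀ j, Ac j) → Strategy Ac i)
    (b : ∀ j, Ac j) :
    (oneStepStrat i a R).shift 1 (fun _ => b) = R b := by
  refine Strategy.ext' ?_
  funext t q
  show (oneStepStrat i a R).act (1 + t) (splice 1 (fun _ => b) q) = (R b).act t q
  rw [show 1 + t = t + 1 by omega]
  show (R (splice 1 (fun _ => b) q 0)).act t (fun r => splice 1 (fun _ => b) q (r + 1))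
    = (R b).act t q
  have h0 : splice 1 (fun _ => b) q 0 = b := by simp [splice]
  rw [h0]
  refine (R b).depends_on_past t _ _ (fun s hs => ?_)
  simp [splice]

theorem Mg_le_of_shift (PM : PlayMeasure Ac) (i : ι) {g g' : Play Ac → ℝ} {C : ℝ}
    (hgm : Measurable g) (hgb : ∀ p, |g p| ≤ C)
    (hg'b : ∀ p, |g' p| ≤ C)
    (hrel : ∀ (b : ∀ j, Ac j) (q : Play Ac), g (splice 1 (fun _ => b) q) = g' q) :
    Mg PM g' i ≤ Mg PM g i := by
  refine le_of_forall_pos_le_add fun η hη => ?_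
  set η' := η / 2 with hη'def
  have hη' : 0 < η' := by positivity
  have hτex : ∃ τ : Profile Ac, (⨆ σi : Strategy Ac i,
      ∫ q, g q ∂ PM.μ (Function.update τ i σi)) < Mg PM g i + η' := by
    refine exists_lt_of_ciInf_lt ?_
    exact lt_add_of_pos_right _ hη'
  obtain ⟨τ, hτ⟩ := hτex
  have hch : ∀ b : ∀ j, Ac j, ∃ ρi : Strategy Ac i,
      (⨆ ρi' : Strategy Ac i, ∫ q, g' q ∂ PM.μ
        (Function.update (fun j => (τ j).shift 1 (fun _ => b)) i ρi')) - η'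
        < ∫ q, g' q ∂ PM.μ
            (Function.update (fun j => (τ j).shift 1 (fun _ => b)) i ρi) := by
    intro b
    refine exists_lt_of_lt_ciSup ?_
    exact sub_lt_self _ hη'
  choose R hR using hch
  set σi := oneStepStrat i (dfltA i) R with hσi
  have hprof : ∀ b : ∀ j, Ac j,
      (fun j => ((Function.update τ i σi) j).shift 1 (fun _ => b))
        = Function.update (fun j => (τ j).shift 1 (fun _ => b)) i (R b) := by
    intro b
    funext j
    by_cases hj : j = i
    · subst hj
      simp only [Function.update_self, hσi]
      exact oneStepStrat_shift _ _ R b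
    · simp only [Function.update_of_ne hj]
  have hlow : ∀ b : ∀ j, Ac j, Mg PM g' i - η'
      ≤ ∫ q, g' q ∂ PM.μ (Function.update (fun j => (τ j).shift 1 (fun _ => b)) i (R b)) := by
    intro b
    have h1 : Mg PM g' i ≤ ⨆ ρi' : Strategy Ac i, ∫ q, g' q ∂ PM.μ
        (Function.update (fun j => (τ j).shift 1 (fun _ => b)) i ρi') :=
      ciInf_le (bddBelow_suppayoff PM hg'b i) _
    have h2 := hR b
    linarith
  have hdecomp := integral_eq_sum_firstStage PM (Function.update τ i σi) hgm hgb
  have hsummand : ∀ b : ∀ j, Ac j,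
      ∫ q, g (splice 1 (fun _ => b) q) ∂ PM.μ
          (fun j => ((Function.update τ i σi) j).shift 1 (fun _ => b))
        = ∫ q, g' q ∂ PM.μ
            (Function.update (fun j => (τ j).shift 1 (fun _ => b)) i (R b)) := by
    intro b
    rw [hprof b]
    simp_rw [hrel b]
  have hmain : Mg PM g' i - η' ≤ ∫ q, g q ∂ PM.μ (Function.update τ i σi) := by
    rw [hdecomp]
    have h3 : ∀ b : ∀ j, Ac j,
        (PM.μ (Function.update τ i σi) (Cyl 1 (fun _ => b))).toReal * (Mg PM g' i - η')
          ≤ (PM.μ (Function.update τ i σi) (Cyl 1 (fun _ => b))).toReal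
              * ∫ q, g (splice 1 (fun _ => b) q) ∂ PM.μ
                  (fun j => ((Function.update τ i σi) j).shift 1 (fun _ => b)) := by
      intro b
      refine mul_le_mul_of_nonneg_left ?_ ENNReal.toReal_nonneg
      rw [hsummand b]
      exact hlow b
    calc Mg PM g' i - η'
        = (∑ b : ∀ j, Ac j,
            (PM.μ (Function.update τ i σi) (Cyl 1 (fun _ => b))).toReal) * (Mg PM g' i - η') := by
          rw [sum_firstStage_weights PM (Function.update τ i σi), one_mul]
      _ = ∑ b : ∀ j, Ac j,
            (PM.μ (Function.update τ i σi) (Cyl 1 (fun _ => b))).toReal * (Mg PM g' i - η') := by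
          rw [Finset.sum_mul]
      _ ≤ _ := Finset.sum_le_sum fun b _ => h3 b
  have hup : ∫ q, g q ∂ PM.μ (Function.update τ i σi) ≤ ⨆ σi' : Strategy Ac i,
      ∫ q, g q ∂ PM.μ (Function.update τ i σi') := le_ciSup (bddAbove_payoff PM hgb i τ) σi
  have : Mg PM g' i - η' ≤ Mg PM g i + η' := le_trans hmain (le_trans hup (le_of_lt hτ))
  have hηsum : η' + η' = η := by rw [hη'def]; ring
  linarith

theorem Mg_splice_le (PM : PlayMeasure Ac) (d : ι) {g : Play Ac → ℝ} {C : ℝ}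
    (hgm : Measurable g) (hgb : ∀ p, |g p| ≤ C) (htail : TailMeasurable g)
    (n : ℕ) (h : Play Ac) :
    Mg PM (fun q => g (splice n h q)) d ≤ minmax PM g d := by
  induction n with
  | zero =>
    rw [← Mg_eq_minmax]
    have : (fun q : Play Ac => g (splice 0 h q)) = g := by
      funext q; rw [splice_zero]
    rw [this]
  | succ n ih =>
    refine le_trans ?_ ih
    refine Mg_le_of_shift PM d (C := C)
      ((hgm.comp (measurable_splice n h))) (fun p => hgb _) (fun p => hgb _) ?_
    intro b q
    refine htail _ _ ⟨n + 1, fun t ht => ?_⟩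
    simp only [splice]
    rcases lt_trichotomy t n with h1 | h1 | h1
    · omega
    · omega
    · have e1 : ¬ t < n := by omega
      have e2 : ¬ t - n < 1 := by omega
      have e3 : ¬ t < n + 1 := by omega
      simp only [if_neg e1, if_neg e2, if_neg e3, show t - n - 1 = t - (n + 1) by omega]

theorem exists_punisher (PM : PlayMeasure Ac) (d : ι) {g : Play Ac → ℝ} {C : ℝ}
    (hgm : Measurable g) (hgb : ∀ p, |g p| ≤ C) (htail : TailMeasurable g)
    (n : ℕ) (h : Play Ac) {η : ℝ} (hη : 0 < η) :
    ∃ ρ : Profile Ac, ∀ ρd : Strategy Ac d,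
      ∫ q, g (splice n h q) ∂ PM.μ (Function.update ρ d ρd) ≤ minmax PM g d + η := by
  have h1 : Mg PM (fun q => g (splice n h q)) d < minmax PM g d + η :=
    lt_of_le_of_lt (Mg_splice_le PM d hgm hgb htail n h) (lt_add_of_pos_right _ hη)
  obtain ⟨ρ, hρ⟩ := exists_lt_of_ciInf_lt h1
  refine ⟨ρ, fun ρd => ?_⟩
  refine le_trans (le_ciSup (bddAbove_payoff PM (fun p => hgb _) d ρ) ρd) (le_of_lt hρ)

end Aux5
section Aux6
set_option linter.unusedSectionVars false

theorem subExp_congr (PM : PlayMeasure Ac) (σ : Profile Ac) (g : Play Ac → ℝ) {n : ℕ}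
    {h h' : Play Ac} (hh : ∀ t, t < n → h t = h' t) :
    subExp PM σ g n h = subExp PM σ g n h' := by
  unfold subExp
  have h1 : (fun j => (σ j).shift n h) = (fun j => (σ j).shift n h') := by
    funext j
    refine Strategy.ext' ?_
    funext t q
    show (σ j).act (n + t) (splice n h q) = (σ j).act (n + t) (splice n h' q)
    rw [splice_congr hh q]
  simp_rw [splice_congr hh]
  rw [h1]

/-- projection to the first `n` coordinates -/
def proj (n : ℕ) : Play Ac → (Fin n → ∀ j, Ac j) := fun q t => q t

theorem measurable_proj_top (n : ℕ) :
    @Measurable (Play Ac) (Fin n → ∀ j, Ac j) _ ⊤ (proj n) := by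
  intro s _
  have h1 : proj (Ac := Ac) n ⁻¹' s = ⋃ v ∈ s, Cyl n (extV n v) := by
    ext q
    simp only [Set.mem_preimage, Set.mem_iUnion, mem_cyl]
    constructor
    · intro hq
      refine ⟨proj n q, hq, fun t ht => ?_⟩
      simp [proj, extV, ht]
    · rintro ⟨v, hv, hq⟩
      have : proj (Ac := Ac) n q = v := by
        funext t
        have h2 := hq t.1 t.2
        simp only [extV, t.2, dif_pos] at h2
        simpa [proj] using h2
      rwa [this]
  rw [h1]
  exact MeasurableSet.biUnion (Set.to_countable _) fun v _ => measurableSet_cyl n _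

/-- the filtration generated by the first `n` coordinates -/
noncomputable def Filt : MeasureTheory.Filtration ℕ (inferInstance : MeasurableSpace (Play Ac)) where
  seq n := MeasurableSpace.comap (proj (Ac := Ac) n) ⊤
  mono' := by
    intro a b hab
    have h1 : proj (Ac := Ac) a
        = (fun v : Fin b → ∀ j, Ac j => fun t : Fin a => v ⟨t.1, lt_of_lt_of_le t.2 hab⟩)
            ∘ proj (Ac := Ac) b := rfl
    show MeasurableSpace.comap (proj (Ac := Ac) a) ⊤ ≤ MeasurableSpace.comap (proj (Ac := Ac) b) ⊤
    rw [h1, ← MeasurableSpace.comap_comp]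
    exact MeasurableSpace.comap_mono le_top
  le' := by
    intro n
    exact Measurable.comap_le (measurable_proj_top n)

theorem le_iSup_Filt :
    (inferInstance : MeasurableSpace (Play Ac)) ≤ ⨆ n, (Filt (Ac := Ac)) n := by
  have h1 : ∀ t : ℕ, Measurable[⨆ n, (Filt (Ac := Ac)) n] (fun q : Play Ac => q t) := by
    intro t
    have h2 : Measurable[(Filt (Ac := Ac)) (t + 1)] (fun q : Play Ac => q t) := by
      intro s _
      refine ⟨(fun v : Fin (t + 1) → ∀ j, Ac j => v ⟨t, Nat.lt_succ_self t⟩) ⁻¹' s,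
        MeasurableSpace.measurableSet_top, rfl⟩
    exact h2.mono (le_iSup _ (t + 1)) le_rfl
  exact iSup_le fun t => Measurable.comap_le (h1 t)

theorem measurable_filt_factor (n : ℕ) (G : (Fin n → ∀ j, Ac j) → ℝ) :
    Measurable[(Filt (Ac := Ac)) n] (fun q => G (proj n q)) := by
  intro s _
  exact ⟨G ⁻¹' s, MeasurableSpace.measurableSet_top, rfl⟩

theorem preimage_proj_eq_iUnion (n : ℕ) (S : Set (Fin n → ∀ j, Ac j)) :
    proj (Ac := Ac) n ⁻¹' S = ⋃ v : S, Cyl n (extV n (v : Fin n → ∀ j, Ac j)) := by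
  ext q
  simp only [Set.mem_preimage, Set.mem_iUnion, mem_cyl]
  constructor
  · intro hq
    refine ⟨⟨proj n q, hq⟩, fun t ht => ?_⟩
    simp [proj, extV, ht]
  · rintro ⟨⟨v, hv⟩, hq⟩
    have : proj (Ac := Ac) n q = v := by
      funext t
      have h2 := hq t.1 t.2
      simp only [extV, t.2, dif_pos] at h2
      simpa [proj] using h2
    rwa [this]

theorem disjoint_cyl_extV (n : ℕ) (S : Set (Fin n → ∀ j, Ac j)) :
    Pairwise (Function.onFun Disjoint
      (fun v : S => Cyl n (extV n (v : Fin n → ∀ j, Ac j)))) := by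
  intro v v' hvv
  refine Set.disjoint_left.2 fun q hq hq' => hvv ?_
  refine Subtype.ext ?_
  funext t
  have h1 := hq t.1 t.2
  have h2 := hq' t.1 t.2
  rw [h1] at h2
  simpa [extV, t.2] using h2

theorem exists_good_play (PM : PlayMeasure Ac) (f : ι → Play Ac → ℝ)
    (C : ι → ℝ) (hC : ∀ j p, |f j p| ≤ C j) (hmeas : ∀ j, Measurable (f j))
    (σ : Profile Ac) (δ : ℝ)
    (hgood : ∀ (i : ι) (n : ℕ) (h : Play Ac),
      minmax PM (f i) i - δ ≤ subExp PM σ (f i) n h) :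
    ∃ pstar : Play Ac, ∀ i, minmax PM (f i) i - δ ≤ f i pstar := by
  haveI := PM.isProb σ
  set μ := PM.μ σ with hμ
  have hae : ∀ i : ι, ∀ᵐ q ∂μ, minmax PM (f i) i - δ ≤ f i q := by
    intro i
    have hint : Integrable (f i) μ := integrable_of_bdd (hmeas i) (hC i)
    -- the conditional expectation of `f i` w.r.t. `Filt n` is `subExp`
    have hcond : ∀ n : ℕ, (fun q => subExp PM σ (f i) n q) =ᵐ[μ]
        μ[f i | (Filt (Ac := Ac)) n] := by
      intro n
      have hfact : (fun q : Play Ac => subExp PM σ (f i) n q)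
          = fun q => (fun v => subExp PM σ (f i) n (extV n v)) (proj n q) := by
        funext q
        refine subExp_congr PM σ (f i) fun t ht => ?_
        simp [proj, extV, ht]
      have hgnmeas : Measurable (fun q : Play Ac => subExp PM σ (f i) n q) := by
        rw [hfact]
        exact (measurable_filt_factor n
          (fun v => subExp PM σ (f i) n (extV n v))).mono ((Filt (Ac := Ac)).le n) le_rfl
      have hgnb : ∀ q : Play Ac, |subExp PM σ (f i) n q| ≤ C i := by
        intro q
        haveI := PM.isProb (fun j => (σ j).shift n q)
        exact abs_integral_le_of_bdd (fun p => hC i _)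
      have hgnint : Integrable (fun q : Play Ac => subExp PM σ (f i) n q) μ :=
        integrable_of_bdd hgnmeas hgnb
      refine MeasureTheory.ae_eq_condExp_of_forall_setIntegral_eq ((Filt (Ac := Ac)).le n)
        hint (fun s _ _ => hgnint.integrableOn) ?_ ?_
      · rintro _ ⟨S, -, rfl⟩ _
        rw [preimage_proj_eq_iUnion n S]
        rw [MeasureTheory.integral_iUnion (fun v => measurableSet_cyl n _)
            (disjoint_cyl_extV n S) (by
              rw [← preimage_proj_eq_iUnion n S]; exact hgnint.integrableOn),
          MeasureTheory.integral_iUnion (fun v => measurableSet_cyl n _)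
            (disjoint_cyl_extV n S) (by
              rw [← preimage_proj_eq_iUnion n S]; exact hint.integrableOn)]
        refine tsum_congr fun v => ?_
        have hconst : ∫ q in Cyl n (extV n (v : Fin n → ∀ j, Ac j)),
            subExp PM σ (f i) n q ∂μ
            = (μ (Cyl n (extV n (v : Fin n → ∀ j, Ac j)))).toReal
                * subExp PM σ (f i) n (extV n (v : Fin n → ∀ j, Ac j)) := by
          rw [MeasureTheory.setIntegral_congr_fun (measurableSet_cyl n _)
            (fun q hq => subExp_congr PM σ (f i) fun t ht => hq t ht),
            MeasureTheory.setIntegral_const, smul_eq_mul, measureReal_def]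
        rw [hconst, setIntegral_cyl PM σ n _ (hmeas i)]
        rfl
      · rw [hfact]
        exact ((measurable_filt_factor n
          (fun v => subExp PM σ (f i) n (extV n v))).stronglyMeasurable).aestronglyMeasurable
    have hlevy := hint.tendsto_ae_condExp
      (((hmeas i).mono le_iSup_Filt le_rfl).stronglyMeasurable)
    have hall : ∀ᵐ q ∂μ, ∀ n : ℕ, (fun q => subExp PM σ (f i) n q) q
        = (μ[f i | (Filt (Ac := Ac)) n]) q := by
      rw [MeasureTheory.ae_all_iff]
      exact fun n => hcond n
    filter_upwards [hlevy, hall] with q hq1 hq2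
    refine ge_of_tendsto hq1 (Filter.Eventually.of_forall fun n => ?_)
    rw [← hq2 n]
    exact hgood i n q
  have hfin : ∀ᵐ q ∂μ, ∀ i, minmax PM (f i) i - δ ≤ f i q := by
    rw [MeasureTheory.ae_all_iff]
    exact hae
  haveI : (MeasureTheory.ae μ).NeBot :=
    MeasureTheory.ae_neBot.2 (IsProbabilityMeasure.ne_zero μ)
  exact hfin.exists

end Aux6
section Trigger
set_option linter.unusedSectionVars false

variable (pstar : Play Ac) (Fpun : ι → ℕ → Play Ac → Profile Ac)

open scoped Classical

/-- the mixed action of the grim-trigger profile -/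
noncomputable def triggerAct (j : ι) (m : ℕ) (p : Play Ac) : PMF (Ac j) :=
  if h : ∃ s, s < m ∧ p s ≠ pstar s then
    if hu : ∃! d : ι, p (Nat.find h) d ≠ pstar (Nat.find h) d then
      ((Fpun hu.choose (Nat.find h + 1) (trunc (Nat.find h + 1) p)) j).act
        (m - (Nat.find h + 1)) (fun r => p (Nat.find h + 1 + r))
    else PMF.pure (pstar m j)
  else PMF.pure (pstar m j)

/-- the grim-trigger profile around the play `pstar`, punishing a unique detected
deviator `d` from stage `s + 1` on using the profile `Fpun d (s+1) -`. -/
noncomputable def trigger : Profile Ac := fun j =>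
  { act := fun m p => triggerAct pstar Fpun j m (trunc m p)
    depends_on_past := by
      intro t p q hpq
      show triggerAct pstar Fpun j t (trunc t p) = triggerAct pstar Fpun j t (trunc t q)
      rw [trunc_congr hpq] }

theorem trigger_act_pure (j : ι) (m : ℕ) {p : Play Ac} (hag : ∀ s, s < m → p s = pstar s) :
    (trigger pstar Fpun j).act m p = PMF.pure (pstar m j) := by
  have h : ¬ ∃ s, s < m ∧ trunc m p s ≠ pstar s := by
    push_neg
    intro s hs
    rw [trunc_lt hs]
    exact hag s hs
  show triggerAct pstar Fpun j m (trunc m p) = _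
  rw [triggerAct, dif_neg h]

theorem trigger_shift (j : ι) {t : ℕ} {w : Play Ac} {i : ι}
    (hpre : ∀ s, s < t → w s = pstar s) (hd : w t i ≠ pstar t i)
    (hun : ∀ k, w t k ≠ pstar t k → k = i) :
    (trigger pstar Fpun j).shift (t + 1) w = (Fpun i (t + 1) (trunc (t + 1) w)) j := by
  refine Strategy.ext' ?_
  funext r q
  show triggerAct pstar Fpun j ((t + 1) + r) (trunc ((t + 1) + r) (splice (t + 1) w q))
    = ((Fpun i (t + 1) (trunc (t + 1) w)) j).act r q
  set m := (t + 1) + r with hm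
  set P := trunc ((t + 1) + r) (splice (t + 1) w q) with hP
  have hPs : ∀ s, s < t + 1 → P s = w s := by
    intro s hs
    rw [hP, trunc_lt (by omega)]
    simp [splice, hs]
  have hPw : P t ≠ pstar t := by
    rw [hPs t (by omega)]
    exact fun hh => hd (congrFun hh i)
  have hex : ∃ s, s < m ∧ P s ≠ pstar s := ⟨t, by omega, hPw⟩
  have hfind : Nat.find hex = t := by
    rw [Nat.find_eq_iff]
    refine ⟨⟨by omega, hPw⟩, ?_⟩
    intro s hs
    push_neg
    intro _
    rw [hPs s (by omega), hpre s hs]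
  rw [triggerAct, dif_pos hex, hfind]
  have hu : ∃! d : ι, P t d ≠ pstar t d := by
    refine ⟨i, by rw [hPs t (by omega)]; exact hd, ?_⟩
    intro k hk
    rw [hPs t (by omega)] at hk
    exact hun k hk
  rw [dif_pos hu]
  have hchoose : hu.choose = i := by
    have hPt : P t = w t := hPs t (by omega)
    have h1 := hu.choose_spec.1
    exact hun _ fun hc => h1 ((congrFun hPt hu.choose).trans hc)
  have htr : trunc (t + 1) P = trunc (t + 1) w := trunc_congr hPs
  rw [hchoose, htr, show m - (t + 1) = r by omega]
  refine ((Fpun i (t + 1) (trunc (t + 1) w)) j).depends_on_past r _ _ fun s hs => ?_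
  rw [hP, trunc_lt (by omega)]
  simp only [splice, if_neg (show ¬ (t + 1 + s < t + 1) by omega)]
  rw [show t + 1 + s - (t + 1) = s by omega]

theorem trigger_cyl_zero (PM : PlayMeasure Ac) (ρ : Profile Ac) {t : ℕ} {w : Play Ac} {j0 : ι}
    (hρ : ρ j0 = trigger pstar Fpun j0)
    (hpre : ∀ s, s < t → w s = pstar s) (hj0 : w t j0 ≠ pstar t j0) {n : ℕ} (hn : t < n) :
    PM.μ ρ (Cyl n w) = 0 := by
  rw [cyl_measure]
  refine Finset.prod_eq_zero (Finset.mem_range.2 hn) ?_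
  refine Finset.prod_eq_zero (Finset.mem_univ j0) ?_
  rw [hρ, trigger_act_pure pstar Fpun j0 t hpre, PMF.pure_apply]
  simp [hj0]

theorem trigger_expPay (PM : PlayMeasure Ac) {g : Play Ac → ℝ} :
    expPay PM (trigger pstar Fpun) g = g pstar := by
  haveI := PM.isProb (trigger pstar Fpun)
  have hsub : {q : Play Ac | q ≠ pstar} ⊆ ⋃ z : ℕ × (∀ j, Ac j),
      (if z.2 = pstar z.1 then (∅ : Set (Play Ac))
        else Cyl (z.1 + 1) (Function.update pstar z.1 z.2)) := by
    intro q hq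
    have hex : ∃ s, q s ≠ pstar s := by
      by_contra hc
      push_neg at hc
      exact hq (funext hc)
    set t := Nat.find hex with ht
    refine Set.mem_iUnion.2 ⟨(t, q t), ?_⟩
    have hqt : q t ≠ pstar t := Nat.find_spec hex
    simp only [if_neg hqt]
    intro s hs
    rcases Nat.lt_succ_iff_lt_or_eq.1 hs with hst | hst
    · rw [Function.update_of_ne (show s ≠ t from by omega) _ _]
      by_contra hne
      exact (Nat.find_min hex hst) hne
    · subst hst
      rw [Function.update_self]
  have hnull : PM.μ (trigger pstar Fpun) {q | q ≠ pstar} = 0 := by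
    refine measure_mono_null hsub (measure_iUnion_null fun z => ?_)
    by_cases hz : z.2 = pstar z.1
    · simp [hz]
    · simp only [if_neg hz]
      obtain ⟨j0, hj0⟩ := Function.ne_iff.1 hz
      refine trigger_cyl_zero pstar Fpun PM (t := z.1) (n := z.1 + 1) (j0 := j0) _ rfl
        (fun s hs => Function.update_of_ne (show s ≠ z.1 from by omega) _ _) ?_
        (Nat.lt_succ_self z.1)
      rw [Function.update_self]
      exact hj0
  have hae : ∀ᵐ q ∂ PM.μ (trigger pstar Fpun), q = pstar := by
    rw [MeasureTheory.ae_iff]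
    simpa using hnull
  have hae2 : g =ᵐ[PM.μ (trigger pstar Fpun)] fun _ => g pstar := by
    filter_upwards [hae] with q hq
    rw [hq]
  rw [expPay, MeasureTheory.integral_congr_ae hae2]
  simp

end Trigger
/-- If there are a strategy profile `σ` and `δ ∈ [0, ε)` such that in every
subgame every player's expected payoff under `σ` is at least her minmax value minus `δ`,
then the game admits an `ε`-equilibrium. -/
theorem exists_eps_equilibrium_of_acceptable_profile (PM : PlayMeasure Ac) (f : ι → Play Ac → ℝ)
    (hbdd : ∀ j, BddPayoff (f j)) (hmeas : ∀ j, Measurable (f j))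
    (htail : ∀ j, TailMeasurable (f j))
    (ε : ℝ) (hε : 0 < ε)
    (σ : Profile Ac) (δ : ℝ) (hδ0 : 0 ≤ δ) (hδε : δ < ε)
    (hgood : ∀ (i : ι) (n : ℕ) (h : Play Ac),
      minmax PM (f i) i - δ ≤ subExp PM σ (f i) n h) :
    ∃ σstar : Profile Ac, IsEpsEquilibrium PM f ε σstar := by
  classical
  choose C hC using hbdd
  set η : ℝ := (ε - δ) / 2 with hηdef
  have hη : 0 < η := by rw [hηdef]; linarith
  have hpunex : ∀ (d : ι) (n : ℕ) (h : Play Ac), ∃ ρ : Profile Ac, ∀ ρd : Strategy Ac d,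
      ∫ q, (f d) (splice n h q) ∂ PM.μ (Function.update ρ d ρd)
        ≤ minmax PM (f d) d + η :=
    fun d n h => exists_punisher PM d (hmeas d) (hC d) (htail d) n h hη
  choose F0 hF0 using hpunex
  obtain ⟨pstar, hpstar⟩ := exists_good_play PM f C hC hmeas σ δ hgood
  refine ⟨trigger pstar F0, ?_⟩
  intro i σi'
  haveI hP1 := PM.isProb (Function.update (trigger pstar F0) i σi')
  rw [trigger_expPay pstar F0 PM]
  have hBe : f i pstar + (δ + η) ≤ f i pstar + ε := by
    have h1 : δ + η ≤ ε := by rw [hηdef]; linarith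
    linarith
  refine le_trans ?_ hBe
  set w : ℕ → (∀ j, Ac j) → Play Ac := fun t a => Function.update pstar t a with hw
  set S : Option (ℕ × (∀ j, Ac j)) → Set (Play Ac) := fun z =>
    z.elim {pstar} (fun za =>
      if za.2 = pstar za.1 then (∅ : Set (Play Ac)) else Cyl (za.1 + 1) (w za.1 za.2)) with hS
  have hSnone : S none = {pstar} := rfl
  have hSsome : ∀ t a, S (some (t, a))
      = if a = pstar t then (∅ : Set (Play Ac)) else Cyl (t + 1) (w t a) := fun t a => rfl
  have hSmeas : ∀ z, MeasurableSet (S z) := by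
    rintro (_ | ⟨t, a⟩)
    · exact measurableSet_singleton _
    · rw [hSsome]
      split
      · exact MeasurableSet.empty
      · exact measurableSet_cyl _ _
  have hmem : ∀ t a q, q ∈ Cyl (t + 1) (w t a) →
      (∀ s, s < t → q s = pstar s) ∧ q t = a := by
    intro t a q hq
    constructor
    · intro s hs
      rw [hq s (by omega)]
      show Function.update pstar t a s = pstar s
      exact Function.update_of_ne (show s ≠ t from by omega) _ _
    · rw [hq t (by omega)]
      show Function.update pstar t a t = a
      exact Function.update_self _ _ _
  have hnone : ∀ t a, Disjoint (S none) (S (some (t, a))) := by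
    intro t a
    rw [hSnone, hSsome]
    by_cases ha : a = pstar t
    · rw [if_pos ha]
      exact disjoint_bot_right
    · rw [if_neg ha]
      refine Set.disjoint_left.2 ?_
      intro q hq1 hq2
      rw [Set.mem_singleton_iff] at hq1
      subst hq1
      exact ha ((hmem t a _ hq2).2.symm)
  have hlt : ∀ t a t' a', a ≠ pstar t → t < t' →
      Disjoint (Cyl (t + 1) (w t a)) (Cyl (t' + 1) (w t' a')) := by
    intro t a t' a' ha h
    refine Set.disjoint_left.2 fun q hq hq' => ?_
    have h1 := (hmem t a q hq).2
    have h2 := (hmem t' a' q hq').1 t h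
    exact ha (h1.symm.trans h2)
  have hdisj : Pairwise (Function.onFun Disjoint S) := by
    rintro (_ | ⟨t, a⟩) (_ | ⟨t', a'⟩) hzz
    · exact absurd rfl hzz
    · exact hnone t' a'
    · exact (hnone t a).symm
    · show Disjoint (S (some (t, a))) (S (some (t', a')))
      rw [hSsome, hSsome]
      by_cases ha : a = pstar t
      · rw [if_pos ha]
        exact disjoint_bot_left
      · by_cases ha' : a' = pstar t'
        · rw [if_neg ha, if_pos ha']
          exact disjoint_bot_right
        · rw [if_neg ha, if_neg ha']
          rcases lt_trichotomy t t' with h | h | h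
          · exact hlt t a t' a' ha h
          · subst h
            have haa : a ≠ a' := fun hc => hzz (by rw [hc])
            refine Set.disjoint_left.2 fun q hq hq' => ?_
            exact haa ((hmem t a q hq).2.symm.trans (hmem t a' q hq').2)
          · exact (hlt t' a' t a ha' h).symm
  have hcover : (⋃ z, S z) = Set.univ := by
    ext q
    simp only [Set.mem_iUnion, Set.mem_univ, iff_true]
    by_cases hq : q = pstar
    · exact ⟨none, by rw [hSnone, hq]; exact rfl⟩
    · have hex : ∃ s, q s ≠ pstar s := by
        by_contra hc
        push_neg at hc
        exact hq (funext hc)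
      refine ⟨some (Nat.find hex, q (Nat.find hex)), ?_⟩
      have hqt : q (Nat.find hex) ≠ pstar (Nat.find hex) := Nat.find_spec hex
      rw [hSsome, if_neg hqt]
      intro s hs
      rcases Nat.lt_succ_iff_lt_or_eq.1 hs with hst | hst
      · show q s = Function.update pstar (Nat.find hex) (q (Nat.find hex)) s
        rw [Function.update_of_ne (show s ≠ Nat.find hex from by omega) _ _]
        by_contra hne
        exact Nat.find_min hex hst hne
      · subst hst
        show q (Nat.find hex) = Function.update pstar (Nat.find hex) (q (Nat.find hex)) (Nat.find hex)
        rw [Function.update_self]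
  show (∫ q, f i q ∂ PM.μ (Function.update (trigger pstar F0) i σi'))
    ≤ f i pstar + (δ + η)
  refine sum_piece hSmeas hdisj hcover (integrable_of_bdd (hmeas i) (hC i)) ?_
  rintro (_ | ⟨t, a⟩)
  · rw [hSnone]
    have h1 : ∫ q in ({pstar} : Set (Play Ac)), f i q
          ∂ PM.μ (Function.update (trigger pstar F0) i σi')
        = (PM.μ (Function.update (trigger pstar F0) i σi') {pstar}).toReal * f i pstar := by
      rw [MeasureTheory.Measure.restrict_singleton, MeasureTheory.integral_smul_measure,
        MeasureTheory.integral_dirac, smul_eq_mul]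
    rw [h1]
    refine mul_le_mul_of_nonneg_left ?_ ENNReal.toReal_nonneg
    linarith
  · rw [hSsome]
    by_cases ha : a = pstar t
    · rw [if_pos ha]
      simp
    · rw [if_neg ha]
      by_cases honly : ∀ k, w t a t k ≠ pstar t k → k = i
      · have hati : w t a t i ≠ pstar t i := by
          obtain ⟨k, hk⟩ := Function.ne_iff.1 ha
          have hk' : w t a t k ≠ pstar t k := by
            show Function.update pstar t a t k ≠ pstar t k
            rw [Function.update_self]
            exact hk
          have hki := honly k hk'
          rw [hki] at hk'
          exact hk'
        have hpre : ∀ s, s < t → w t a s = pstar s := fun s hs =>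
          Function.update_of_ne (show s ≠ t from by omega) _ _
        rw [setIntegral_cyl PM _ (t + 1) (w t a) (hmeas i)]
        refine mul_le_mul_of_nonneg_left ?_ ENNReal.toReal_nonneg
        have hprof : (fun j => ((Function.update (trigger pstar F0) i σi') j).shift (t + 1) (w t a))
            = Function.update (F0 i (t + 1) (trunc (t + 1) (w t a))) i
                (σi'.shift (t + 1) (w t a)) := by
          funext j
          by_cases hj : j = i
          · subst hj
            simp only [Function.update_self]
          · rw [Function.update_of_ne hj, Function.update_of_ne hj]
            exact trigger_shift pstar F0 j hpre hati honly
        rw [hprof]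
        have hbnd := hF0 i (t + 1) (trunc (t + 1) (w t a)) (σi'.shift (t + 1) (w t a))
        have hsp : (fun q => f i (splice (t + 1) (w t a) q))
            = fun q => f i (splice (t + 1) (trunc (t + 1) (w t a)) q) := by
          funext q
          rw [splice_trunc]
        calc ∫ q, f i (splice (t + 1) (w t a) q)
              ∂ PM.μ (Function.update (F0 i (t + 1) (trunc (t + 1) (w t a))) i
                  (σi'.shift (t + 1) (w t a)))
            = ∫ q, f i (splice (t + 1) (trunc (t + 1) (w t a)) q)
              ∂ PM.μ (Function.update (F0 i (t + 1) (trunc (t + 1) (w t a))) i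
                  (σi'.shift (t + 1) (w t a))) := by rw [hsp]
          _ ≤ minmax PM (f i) i + η := hbnd
          _ ≤ f i pstar + (δ + η) := by
              have h2 := hpstar i
              linarith
      · push_neg at honly
        obtain ⟨k, hk1, hk2⟩ := honly
        have h0 : PM.μ (Function.update (trigger pstar F0) i σi') (Cyl (t + 1) (w t a)) = 0 := by
          refine trigger_cyl_zero pstar F0 PM (t := t) (n := t + 1) (j0 := k) _ ?_
            (fun s hs => Function.update_of_ne (show s ≠ t from by omega) _ _) hk1
            (Nat.lt_succ_self t)
          rw [Function.update_of_ne hk2]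
        have hz : ∫ q in Cyl (t + 1) (w t a), f i q
            ∂ PM.μ (Function.update (trigger pstar F0) i σi') = 0 := by
          have hr : (PM.μ (Function.update (trigger pstar F0) i σi')).restrict
              (Cyl (t + 1) (w t a)) = 0 := MeasureTheory.Measure.restrict_eq_zero.2 h0
          rw [hr, MeasureTheory.integral_zero_measure]
        rw [hz, h0]
        simp

end Blackwell
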